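/- Let f : ℝⁿ × ℝᵐ → ℝ and let F*(x) = max_y f(x,y) over a set 𝒴, with Y*(x) the set of maximizers. Suppose F* is differentiable at a point x, and for each y ∈ 𝒴 the map t ↦ f(x + t d, y) is differentiable at t = 0 with derivative ⟨∇ₓ f(x,y), d⟩. Then for every y* ∈ Y*(x) and every direction d ∈ ℝⁿ, one has ⟨∇F*(x), d⟩ ≥ ⟨∇ₓ f(x, y*), d⟩; consequently ∇F*(x) = ∇ₓ f(x, y*). -/

import Mathlib

open RealInnerProductSpace

/-- Danskin-type gradient formula for the maximal function. -/
theorem stmt_1 {n m : ℕ}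
    (f : EuclideanSpace ℝ (Fin n) → EuclideanSpace ℝ (Fin m) → ℝ)
    (Y : Set (EuclideanSpace ℝ (Fin m)))
    (Fstar : EuclideanSpace ℝ (Fin n) → ℝ)
    (hmax : ∀ z, ∀ y ∈ Y, f z y ≤ Fstar z)
    (x : EuclideanSpace ℝ (Fin n))
    (gF : EuclideanSpace ℝ (Fin n))
    (hgF : HasGradientAt Fstar gF x)
    (fx : EuclideanSpace ℝ (Fin m) → EuclideanSpace ℝ (Fin n))
    (hfd : ∀ y ∈ Y, ∀ d : EuclideanSpace ℝ (Fin n),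
      HasDerivAt (fun t : ℝ => f (x + t • d) y) ⟪fx y, d⟫ 0) :
    ∀ y ∈ Y, f x y = Fstar x →
      (∀ d : EuclideanSpace ℝ (Fin n), ⟪fx y, d⟫ ≤ ⟪gF, d⟫) ∧ gF = fx y := by
  intro y hy hxy
  have hDF : ∀ d : EuclideanSpace ℝ (Fin n),
      HasDerivAt (fun t : ℝ => Fstar (x + t • d)) ⟪gF, d⟫ 0 := by
    intro d
    have h1 : HasDerivAt (fun t : ℝ => x + t • d) d 0 := by
      simpa using ((hasDerivAt_id (0 : ℝ)).smul_const d).const_add x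
    have hF : HasFDerivAt Fstar ((InnerProductSpace.toDual ℝ _) gF) (x + (0:ℝ) • d) := by
      simpa using hgF.hasFDerivAt
    have h2 := hF.comp_hasDerivAt 0 h1
    have h3 : HasDerivAt (Fstar ∘ fun t : ℝ => x + t • d) ⟪gF, d⟫ 0 := by simpa using h2
    exact h3
  have key : ∀ d : EuclideanSpace ℝ (Fin n), ⟪gF, d⟫ = ⟪fx y, d⟫ := by
    intro d
    have hg : HasDerivAt (fun t : ℝ => Fstar (x + t • d) - f (x + t • d) y)
        (⟪gF, d⟫ - ⟪fx y, d⟫) 0 := (hDF d).sub (hfd y hy d)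
    have hmin : IsLocalMin (fun t : ℝ => Fstar (x + t • d) - f (x + t • d) y) 0 := by
      have : ∀ t : ℝ, (fun t : ℝ => Fstar (x + t • d) - f (x + t • d) y) 0 ≤
          (fun t : ℝ => Fstar (x + t • d) - f (x + t • d) y) t := by
        intro t
        have := hmax (x + t • d) y hy
        simp [hxy]
        linarith
      exact isMinOn_univ_iff.mpr this |>.isLocalMin (by simp)
    have := hmin.hasDerivAt_eq_zero hg
    linarith
  constructor
  · intro d; exact le_of_eq (key d).symm
  · have h0 : ⟪gF - fx y, gF - fx y⟫ = (0 : ℝ) := by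
      rw [inner_sub_left, key]
      ring
    have := inner_self_eq_zero.mp h0
    exact sub_eq_zero.mp this
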